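/- Assume the groups are sorted so that ρ_1 < ρ_2 < ⋯ < ρ_M, and suppose the index m satisfies both f¹_m > 0 and f⁰_m > 0. Then every optimal pushing strategy c* satisfies c*_i = 0 for all i < m, c*_j = 1 for all j > m, and 0 < c*_m < 1 with c*_m the unique solution in (0,1) of the watershed equation at index m. -/

import Mathlib

open Filter Set Topology

lemma my_deriv (A a K b : ℝ) (y : ℝ) :
    HasDerivAt (fun x : ℝ => (A - a * x) * (1 - Real.exp (K + b * x)))
      ((-a) * (1 - Real.exp (K + b * y)) + (A - a * y) * (-(b * Real.exp (K + b * y)))) y := by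
  have h1 : HasDerivAt (fun x : ℝ => A - a * x) (-a) y := by
    simpa using ((hasDerivAt_id y).const_mul a).const_sub A
  have h2 : HasDerivAt (fun x : ℝ => K + b * x) b y := by
    simpa using ((hasDerivAt_id y).const_mul b).const_add K
  have h3 : HasDerivAt (fun x : ℝ => 1 - Real.exp (K + b * x))
      (-(b * Real.exp (K + b * y))) y := by
    simpa [mul_comm] using (h2.exp).const_sub 1
  exact h1.mul h3

lemma my_max_right (g : ℝ → ℝ) (g' a b : ℝ) (hg : HasDerivAt g g' a) (hab : a < b)
    (hmax : ∀ x ∈ Set.Ioc a b, g x ≤ g a) : g' ≤ 0 := by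
  have h := hasDerivAt_iff_tendsto_slope.mp hg
  have h3 : Tendsto (slope g a) (𝓝[>] a) (𝓝 g') :=
    h.mono_left (nhdsWithin_mono _ (fun x hx => ne_of_gt hx))
  refine le_of_tendsto h3 ?_
  have hIoc : Set.Ioc a b ∈ 𝓝[>] a := by
    refine Filter.inter_mem self_mem_nhdsWithin
      (mem_nhdsWithin_of_mem_nhds (Iic_mem_nhds hab))
  filter_upwards [hIoc] with x hx
  have hnum : g x - g a ≤ 0 := sub_nonpos.mpr (hmax x hx)
  have hden : 0 < x - a := sub_pos.mpr hx.1
  simpa [slope_def_field, div_eq_mul_inv] using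
    div_nonpos_of_nonpos_of_nonneg hnum hden.le

lemma my_max_left (g : ℝ → ℝ) (g' a b : ℝ) (hg : HasDerivAt g g' a) (hba : b < a)
    (hmax : ∀ x ∈ Set.Ico b a, g x ≤ g a) : 0 ≤ g' := by
  have h := hasDerivAt_iff_tendsto_slope.mp hg
  have h3 : Tendsto (slope g a) (𝓝[<] a) (𝓝 g') :=
    h.mono_left (nhdsWithin_mono _ (fun x hx => ne_of_lt hx))
  refine ge_of_tendsto h3 ?_
  have hIco : Set.Ico b a ∈ 𝓝[<] a := by
    refine Filter.inter_mem (mem_nhdsWithin_of_mem_nhds (Ici_mem_nhds hba))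
      self_mem_nhdsWithin
  filter_upwards [hIco] with x hx
  have hnum : g x - g a ≤ 0 := sub_nonpos.mpr (hmax x hx)
  have hden : x - a < 0 := sub_neg.mpr hx.2
  have : 0 ≤ (g x - g a) / (x - a) := div_nonneg_of_nonpos hnum hden.le
  simpa [slope_def_field] using this

lemma my_onedim (B ti ρi S0 T0 : ℝ) (hB : 0 < B) (hti : 0 < ti) (hρi : 0 < ρi)
    (cmi : ℝ) (hcm0 : 0 ≤ cmi) (hcm1 : cmi ≤ 1)
    (hmax : ∀ x ∈ Set.Icc (0:ℝ) 1,
      (S0 + ti * (cmi - x)) * (1 - Real.exp (-B * (T0 + ti * ρi * (x - cmi)))) ≤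
      S0 * (1 - Real.exp (-B * T0))) :
    (cmi < 1 → S0 * (B * ρi) ≤ Real.exp (B * T0) - 1) ∧
    (0 < cmi → Real.exp (B * T0) - 1 ≤ S0 * (B * ρi)) := by
  set A : ℝ := S0 + ti * cmi with hA
  set K : ℝ := -B * T0 + B * (ti * ρi) * cmi with hK
  set b : ℝ := -(B * (ti * ρi)) with hb
  have hre : ∀ x : ℝ, A - ti * x = S0 + ti * (cmi - x) := fun x => by rw [hA]; ring
  have hre2 : ∀ x : ℝ, K + b * x = -B * (T0 + ti * ρi * (x - cmi)) := fun x => by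
    rw [hK, hb]; ring
  have hKc : K + b * cmi = -B * T0 := by rw [hK, hb]; ring
  have hgmax : ∀ x ∈ Set.Icc (0:ℝ) 1,
      (fun x : ℝ => (A - ti * x) * (1 - Real.exp (K + b * x))) x ≤
      (fun x : ℝ => (A - ti * x) * (1 - Real.exp (K + b * x))) cmi := by
    intro x hx
    simp only
    rw [hre x, hre2 x, hKc]
    have hAc : A - ti * cmi = S0 := by rw [hA]; ring
    rw [hAc]
    exact hmax x hx
  set E : ℝ := Real.exp (-B * T0) with hE
  have hEe : Real.exp (K + b * cmi) = E := by rw [hKc]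
  have hEE : E * Real.exp (B * T0) = 1 := by
    rw [hE, ← Real.exp_add, show -B * T0 + B * T0 = 0 by ring, Real.exp_zero]
  have hDval : (-ti) * (1 - Real.exp (K + b * cmi)) + (A - ti * cmi) *
      (-(b * Real.exp (K + b * cmi)))
      = ti * E * (S0 * (B * ρi) - (Real.exp (B * T0) - 1)) := by
    rw [hEe, hA, hb]
    linear_combination ti * hEE
  have hpos : 0 < ti * E := mul_pos hti (Real.exp_pos _)
  constructor
  · intro h1
    have hD0 := my_max_right _ _ cmi 1 (my_deriv A ti K b cmi) h1
      (fun x hx => hgmax x ⟨le_trans hcm0 hx.1.le, hx.2⟩)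
    rw [hDval] at hD0
    nlinarith [hpos]
  · intro h0
    have hD0 := my_max_left _ _ cmi 0 (my_deriv A ti K b cmi) h0
      (fun x hx => hgmax x ⟨hx.1, le_trans hx.2.le hcm1⟩)
    rw [hDval] at hD0
    nlinarith [hpos]

set_option maxHeartbeats 1000000

/-- With groups sorted in strictly increasing order of sharing
probability, if index `m` satisfies `f¹_m > 0` and `f⁰_m > 0`, then every optimal
pushing strategy pushes with probability 0 below `m`, 1 above `m`, and `c m` is the
unique solution in `(0,1)` of the watershed equation. -/
theorem stmt_5 (M : ℕ) (hM : 1 ≤ M) (B : ℝ) (hB : 0 < B)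
    (t ρ : Fin M → ℝ) (ht : ∀ i, 0 < t i) (hρ : ∀ i, 0 < ρ i ∧ ρ i ≤ 1)
    (hsort : StrictMono ρ) (m : Fin M)
    (hf1 : 0 < 1 + B * ρ m * (∑ i ∈ Finset.Iic m, t i) -
      Real.exp (B * ∑ j ∈ Finset.Ioi m, t j * ρ j))
    (hf0 : 0 < Real.exp (B * ∑ j ∈ Finset.Ici m, t j * ρ j) -
      B * ρ m * (∑ i ∈ Finset.Iio m, t i) - 1)
    (c : Fin M → ℝ) (hc : ∀ i, 0 ≤ c i ∧ c i ≤ 1)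
    (hopt : ∀ d : Fin M → ℝ, (∀ i, 0 ≤ d i ∧ d i ≤ 1) →
      (∑ i, t i * (1 - d i)) * (1 - Real.exp (-B * ∑ k, t k * ρ k * d k)) ≤
      (∑ i, t i * (1 - c i)) * (1 - Real.exp (-B * ∑ k, t k * ρ k * c k))) :
    (∀ i : Fin M, i < m → c i = 0) ∧ (∀ j : Fin M, m < j → c j = 1) ∧
    (0 < c m ∧ c m < 1) ∧
    (B * ρ m * ((∑ i ∈ Finset.Iic m, t i) - t m * c m) + 1 =
      Real.exp (B * (∑ j ∈ Finset.Ioi m, t j * ρ j) + B * t m * ρ m * c m)) ∧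
    (∀ x : ℝ, 0 < x → x < 1 →
      B * ρ m * ((∑ i ∈ Finset.Iic m, t i) - t m * x) + 1 =
        Real.exp (B * (∑ j ∈ Finset.Ioi m, t j * ρ j) + B * t m * ρ m * x) →
      x = c m) := by
  classical
  haveI : Nonempty (Fin M) := ⟨⟨0, hM⟩⟩
  set S0 : ℝ := ∑ j, t j * (1 - c j) with hS0def
  set T0 : ℝ := ∑ k, t k * ρ k * c k with hT0def
  -- sums under update
  have hsum1 : ∀ (i : Fin M) (x : ℝ),
      (∑ j, t j * (1 - Function.update c i x j)) = S0 + t i * (c i - x) := by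
    intro i x
    have h : ∀ j : Fin M, t j * (1 - Function.update c i x j) =
        t j * (1 - c j) + (if j = i then t i * (c i - x) else 0) := by
      intro j
      by_cases hj : j = i
      · subst hj; rw [Function.update_self, if_pos rfl]; ring
      · rw [Function.update_of_ne hj, if_neg hj]; ring
    rw [Finset.sum_congr rfl (fun j _ => h j), Finset.sum_add_distrib,
      Finset.sum_ite_eq' Finset.univ i, if_pos (Finset.mem_univ i), hS0def]
  have hsum2 : ∀ (i : Fin M) (x : ℝ),
      (∑ k, t k * ρ k * Function.update c i x k) = T0 + t i * ρ i * (x - c i) := by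
    intro i x
    have h : ∀ j : Fin M, t j * ρ j * Function.update c i x j =
        t j * ρ j * c j + (if j = i then t i * ρ i * (x - c i) else 0) := by
      intro j
      by_cases hj : j = i
      · subst hj; rw [Function.update_self, if_pos rfl]; ring
      · rw [Function.update_of_ne hj, if_neg hj]; ring
    rw [Finset.sum_congr rfl (fun j _ => h j), Finset.sum_add_distrib,
      Finset.sum_ite_eq' Finset.univ i, if_pos (Finset.mem_univ i), hT0def]
  -- positivity of optimum value
  have hGpos : 0 < S0 * (1 - Real.exp (-B * T0)) := by
    have hd := hopt (fun _ => (1:ℝ)/2) (fun i => by norm_num)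
    have p1 : 0 < ∑ i, t i * (1 - (1:ℝ)/2) :=
      Finset.sum_pos (fun i _ => by nlinarith [ht i]) Finset.univ_nonempty
    have p2 : 0 < ∑ k, t k * ρ k * ((1:ℝ)/2) :=
      Finset.sum_pos (fun i _ => by nlinarith [ht i, (hρ i).1]) Finset.univ_nonempty
    have p3 : Real.exp (-B * ∑ k, t k * ρ k * ((1:ℝ)/2)) < 1 :=
      Real.exp_lt_one_iff.mpr (by nlinarith)
    exact lt_of_lt_of_le (mul_pos p1 (by linarith)) hd
  have hS0nonneg : 0 ≤ S0 :=
    Finset.sum_nonneg (fun i _ => by nlinarith [ht i, (hc i).2])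
  have hS0pos : 0 < S0 := by
    rcases hS0nonneg.lt_or_eq with h | h
    · exact h
    · exfalso; rw [← h] at hGpos; simp at hGpos
  -- first-order conditions
  have key : ∀ i : Fin M,
      (c i < 1 → S0 * (B * ρ i) ≤ Real.exp (B * T0) - 1) ∧
      (0 < c i → Real.exp (B * T0) - 1 ≤ S0 * (B * ρ i)) := by
    intro i
    refine my_onedim B (t i) (ρ i) S0 T0 hB (ht i) (hρ i).1 (c i) (hc i).1 (hc i).2 ?_
    intro x hx
    have hupd : ∀ j, 0 ≤ Function.update c i x j ∧ Function.update c i x j ≤ 1 := by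
      intro j
      by_cases hj : j = i
      · subst hj; rw [Function.update_self]; exact ⟨hx.1, hx.2⟩
      · rw [Function.update_of_ne hj]; exact hc j
    have hd := hopt (Function.update c i x) hupd
    rw [hsum1 i x, hsum2 i x] at hd
    exact hd
  -- monotone structure
  have claim : ∀ i j : Fin M, i < j → 0 < c i → c j = 1 := by
    intro i j hij hci
    by_contra h
    have hcj : c j < 1 := lt_of_le_of_ne (hc j).2 h
    have h1 := (key j).1 hcj
    have h2 := (key i).2 hci
    have h3 := hsort hij
    nlinarith [mul_pos hS0pos hB]
  have hex : ∃ i, 0 < c i := by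
    by_contra h
    push_neg at h
    have hz : ∀ i, c i = 0 := fun i => le_antisymm (h i) (hc i).1
    have hT0z : T0 = 0 := by
      rw [hT0def]
      exact Finset.sum_eq_zero (fun i _ => by rw [hz i]; ring)
    rw [hT0z] at hGpos
    simp at hGpos
  obtain ⟨k, hck, hlow, hhigh⟩ :
      ∃ k : Fin M, 0 < c k ∧ (∀ i, i < k → c i = 0) ∧ (∀ j, k < j → c j = 1) := by
    obtain ⟨i0, hi0⟩ := hex
    set s : Finset (Fin M) := Finset.univ.filter (fun i => 0 < c i) with hs
    have hsne : s.Nonempty := ⟨i0, by simp [hs, hi0]⟩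
    refine ⟨s.min' hsne, ?_, ?_, ?_⟩
    · have := s.min'_mem hsne
      simp only [hs, Finset.mem_filter] at this
      exact this.2
    · intro i hik
      by_contra h
      have hci : 0 < c i := lt_of_le_of_ne (hc i).1 (Ne.symm h)
      have : s.min' hsne ≤ i := s.min'_le i (by simp [hs, hci])
      exact absurd hik (not_lt.mpr this)
    · intro j hj
      refine claim _ j hj ?_
      have := s.min'_mem hsne
      simp only [hs, Finset.mem_filter] at this
      exact this.2
  -- support identities and bounds for S0, T0
  have hS0supp : S0 = ∑ i ∈ Finset.Iic k, t i * (1 - c i) := by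
    rw [hS0def]
    refine (Finset.sum_subset (Finset.subset_univ _) ?_).symm
    intro x _ hx
    have hkx : k < x := lt_of_not_ge (fun h => hx (Finset.mem_Iic.mpr h))
    rw [hhigh x hkx]; ring
  have hT0supp : T0 = ∑ j ∈ Finset.Ici k, t j * ρ j * c j := by
    rw [hT0def]
    refine (Finset.sum_subset (Finset.subset_univ _) ?_).symm
    intro x _ hx
    have hxk : x < k := lt_of_not_ge (fun h => hx (Finset.mem_Ici.mpr h))
    rw [hlow x hxk]; ring
  have hS0le : S0 ≤ ∑ i ∈ Finset.Iic k, t i := by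
    rw [hS0supp]
    exact Finset.sum_le_sum (fun i _ => by nlinarith [ht i, (hc i).1])
  have hS0ge : (∑ i ∈ Finset.Iio k, t i) ≤ S0 := by
    have h1 : (∑ i ∈ Finset.Iio k, t i) = ∑ i ∈ Finset.Iio k, t i * (1 - c i) :=
      Finset.sum_congr rfl (fun i hi => by rw [hlow i (Finset.mem_Iio.mp hi)]; ring)
    rw [h1, hS0def]
    exact Finset.sum_le_sum_of_subset_of_nonneg (Finset.subset_univ _)
      (fun i _ _ => by nlinarith [ht i, (hc i).2])
  have hT0ge : (∑ j ∈ Finset.Ioi k, t j * ρ j) ≤ T0 := by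
    have h1 : (∑ j ∈ Finset.Ioi k, t j * ρ j) = ∑ j ∈ Finset.Ioi k, t j * ρ j * c j :=
      Finset.sum_congr rfl (fun j hj => by rw [hhigh j (Finset.mem_Ioi.mp hj)]; ring)
    rw [h1, hT0def]
    exact Finset.sum_le_sum_of_subset_of_nonneg (Finset.subset_univ _)
      (fun j _ _ => mul_nonneg (mul_nonneg (ht j).le (hρ j).1.le) (hc j).1)
  have hT0le : T0 ≤ ∑ j ∈ Finset.Ici k, t j * ρ j := by
    rw [hT0supp]
    exact Finset.sum_le_sum (fun j _ =>
      mul_le_of_le_one_right (mul_nonneg (ht j).le (hρ j).1.le) (hc j).2)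
  have hρm := (hρ m).1
  -- the threshold is m
  have hkm : k = m := by
    rcases lt_trichotomy k m with hkm | hkm | hkm
    · exfalso
      have hcm1 : c m = 1 := hhigh m hkm
      have hkey := (key m).2 (by rw [hcm1]; norm_num)
      have e1 : (∑ i ∈ Finset.Iic k, t i) ≤ ∑ i ∈ Finset.Iio m, t i :=
        Finset.sum_le_sum_of_subset_of_nonneg
          (fun x hx => Finset.mem_Iio.mpr (lt_of_le_of_lt (Finset.mem_Iic.mp hx) hkm))
          (fun i _ _ => (ht i).le)
      have e2 : (∑ j ∈ Finset.Ici m, t j * ρ j) ≤ ∑ j ∈ Finset.Ioi k, t j * ρ j :=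
        Finset.sum_le_sum_of_subset_of_nonneg
          (fun x hx => Finset.mem_Ioi.mpr (lt_of_lt_of_le hkm (Finset.mem_Ici.mp hx)))
          (fun j _ _ => mul_nonneg (ht j).le (hρ j).1.le)
      have e3 : Real.exp (B * ∑ j ∈ Finset.Ici m, t j * ρ j) ≤ Real.exp (B * T0) :=
        Real.exp_le_exp.mpr (mul_le_mul_of_nonneg_left (e2.trans hT0ge) hB.le)
      have e4 : S0 * (B * ρ m) ≤ (∑ i ∈ Finset.Iio m, t i) * (B * ρ m) :=
        mul_le_mul_of_nonneg_right (hS0le.trans e1) (by positivity)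
      have e5 : (∑ i ∈ Finset.Iio m, t i) * (B * ρ m)
          = B * ρ m * (∑ i ∈ Finset.Iio m, t i) := by ring
      linarith
    · exact hkm
    · exfalso
      have hcm0 : c m = 0 := hlow m hkm
      have hkey := (key m).1 (by rw [hcm0]; norm_num)
      have e1 : (∑ i ∈ Finset.Iic m, t i) ≤ ∑ i ∈ Finset.Iio k, t i :=
        Finset.sum_le_sum_of_subset_of_nonneg
          (fun x hx => Finset.mem_Iio.mpr (lt_of_le_of_lt (Finset.mem_Iic.mp hx) hkm))
          (fun i _ _ => (ht i).le)
      have e2 : (∑ j ∈ Finset.Ici k, t j * ρ j) ≤ ∑ j ∈ Finset.Ioi m, t j * ρ j :=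
        Finset.sum_le_sum_of_subset_of_nonneg
          (fun x hx => Finset.mem_Ioi.mpr (lt_of_lt_of_le hkm (Finset.mem_Ici.mp hx)))
          (fun j _ _ => mul_nonneg (ht j).le (hρ j).1.le)
      have e3 : Real.exp (B * T0) ≤ Real.exp (B * ∑ j ∈ Finset.Ioi m, t j * ρ j) :=
        Real.exp_le_exp.mpr (mul_le_mul_of_nonneg_left (hT0le.trans e2) hB.le)
      have e4 : (∑ i ∈ Finset.Iic m, t i) * (B * ρ m) ≤ S0 * (B * ρ m) :=
        mul_le_mul_of_nonneg_right (e1.trans hS0ge) (by positivity)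
      have e5 : (∑ i ∈ Finset.Iic m, t i) * (B * ρ m)
          = B * ρ m * (∑ i ∈ Finset.Iic m, t i) := by ring
      linarith
  subst hkm
  have hmio : k ∉ Finset.Iio k := by simp
  have hmoi : k ∉ Finset.Ioi k := by simp
  -- c k < 1
  have hcklt : c k < 1 := by
    by_contra h
    have hck1 : c k = 1 := le_antisymm (hc k).2 (not_lt.mp h)
    have hS0eq : S0 = ∑ i ∈ Finset.Iio k, t i := by
      rw [hS0supp, ← Finset.Iio_insert k, Finset.sum_insert hmio, hck1]
      have h2 : ∑ i ∈ Finset.Iio k, t i * (1 - c i) = ∑ i ∈ Finset.Iio k, t i :=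
        Finset.sum_congr rfl (fun i hi => by rw [hlow i (Finset.mem_Iio.mp hi)]; ring)
      rw [h2]; ring
    have hT0eq : T0 = ∑ j ∈ Finset.Ici k, t j * ρ j := by
      rw [hT0supp]
      refine Finset.sum_congr rfl (fun j hj => ?_)
      rcases eq_or_lt_of_le (Finset.mem_Ici.mp hj) with he | hlt
      · rw [← he, hck1]; ring
      · rw [hhigh j hlt]; ring
    have hkey := (key k).2 hck
    rw [hS0eq, hT0eq] at hkey
    have e5 : (∑ i ∈ Finset.Iio k, t i) * (B * ρ k)
        = B * ρ k * (∑ i ∈ Finset.Iio k, t i) := by ring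
    linarith
  -- stationarity
  have heqφ : S0 * (B * ρ k) = Real.exp (B * T0) - 1 :=
    le_antisymm ((key k).1 hcklt) ((key k).2 hck)
  have hS0eq2 : S0 = (∑ i ∈ Finset.Iic k, t i) - t k * c k := by
    rw [hS0supp, ← Finset.Iio_insert k, Finset.sum_insert hmio, Finset.sum_insert hmio]
    have h2 : ∑ i ∈ Finset.Iio k, t i * (1 - c i) = ∑ i ∈ Finset.Iio k, t i :=
      Finset.sum_congr rfl (fun i hi => by rw [hlow i (Finset.mem_Iio.mp hi)]; ring)
    rw [h2]; ring
  have hT0eq2 : T0 = t k * ρ k * c k + ∑ j ∈ Finset.Ioi k, t j * ρ j := by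
    rw [hT0supp, ← Finset.Ioi_insert k, Finset.sum_insert hmoi]
    have h2 : ∑ j ∈ Finset.Ioi k, t j * ρ j * c j = ∑ j ∈ Finset.Ioi k, t j * ρ j :=
      Finset.sum_congr rfl (fun j hj => by rw [hhigh j (Finset.mem_Ioi.mp hj)]; ring)
    rw [h2]
  have hweq : B * ρ k * ((∑ i ∈ Finset.Iic k, t i) - t k * c k) + 1 =
      Real.exp (B * (∑ j ∈ Finset.Ioi k, t j * ρ j) + B * t k * ρ k * c k) := by
    have h1 : B * (∑ j ∈ Finset.Ioi k, t j * ρ j) + B * t k * ρ k * c k = B * T0 := by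
      rw [hT0eq2]; ring
    rw [h1]
    rw [hS0eq2] at heqφ
    linear_combination heqφ
  refine ⟨hlow, hhigh, ⟨hck, hcklt⟩, hweq, ?_⟩
  intro x hx0 hx1 hxeq
  have hbpos : 0 < B * t k * ρ k := mul_pos (mul_pos hB (ht k)) (hρ k).1
  have hbpos2 : 0 < B * ρ k * t k := by nlinarith
  rcases lt_trichotomy x (c k) with h | h | h
  · exfalso
    have hE : Real.exp (B * (∑ j ∈ Finset.Ioi k, t j * ρ j) + B * t k * ρ k * x) <
        Real.exp (B * (∑ j ∈ Finset.Ioi k, t j * ρ j) + B * t k * ρ k * c k) :=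
      Real.exp_lt_exp.mpr (by nlinarith)
    have hL : B * ρ k * ((∑ i ∈ Finset.Iic k, t i) - t k * c k) + 1 ≤
        B * ρ k * ((∑ i ∈ Finset.Iic k, t i) - t k * x) + 1 := by nlinarith
    linarith [hE, hL, hxeq, hweq]
  · exact h
  · exfalso
    have hE : Real.exp (B * (∑ j ∈ Finset.Ioi k, t j * ρ j) + B * t k * ρ k * c k) <
        Real.exp (B * (∑ j ∈ Finset.Ioi k, t j * ρ j) + B * t k * ρ k * x) :=
      Real.exp_lt_exp.mpr (by nlinarith)
    have hL : B * ρ k * ((∑ i ∈ Finset.Iic k, t i) - t k * x) + 1 ≤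
        B * ρ k * ((∑ i ∈ Finset.Iic k, t i) - t k * c k) + 1 := by nlinarith
    linarith [hE, hL, hxeq, hweq]
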